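/- arXiv:1104.5360 — 5 statements merged into one kernel-verified Lean document; each statement's English description precedes it below -/
import Mathlib

section
/- Let f and h be functions holomorphic on a neighborhood of a closed disk B in the complex plane. Suppose that for every real t in [a, b], the function f(z) + t·h(z) has no zeros on the boundary circle of B. Then the number of zeros (counted with multiplicity) of f(z) + t·h(z) inside B is the same for all t in [a, b]. -/
open Metric Classical

/-- The number of zeros of `f`, counted with multiplicity (via the order of
vanishing of the analytic function), in the set `s`. -/
noncomputable def zeroCount (f : ℂ → ℂ) (s : Set ℂ) : ℕ :=
  ∑ᶠ z ∈ s, if h : AnalyticAt ℂ f z then (analyticOrderAt f z).toNat else 0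

open Complex Filter Topology Set

/-- The order of vanishing at a point, as a total function. -/
noncomputable def ordAt (f : ℂ → ℂ) (z : ℂ) : ℕ :=
  if h : AnalyticAt ℂ f z then (analyticOrderAt f z).toNat else 0

lemma zeroCount_def (f : ℂ → ℂ) (s : Set ℂ) :
    zeroCount f s = ∑ᶠ z ∈ s, ordAt f z := rfl

lemma ordAt_eq_toNat {g : ℂ → ℂ} {z : ℂ} (hg : AnalyticAt ℂ g z) :
    ordAt g z = (analyticOrderAt g z).toNat := by
  simp only [ordAt, dif_pos hg]

lemma ordAt_eq_zero {g : ℂ → ℂ} {z : ℂ} (hg : AnalyticAt ℂ g z) (h : g z ≠ 0) :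
    ordAt g z = 0 := by
  have h0 : analyticOrderAt g z = ((0 : ℕ) : ℕ∞) := by
    rw [hg.analyticOrderAt_eq_natCast]
    exact ⟨g, hg, h, by filter_upwards with y using by simp⟩
  rw [ordAt_eq_toNat hg, h0]
  rfl

lemma order_ne_top_of_finiteZeros {g : ℂ → ℂ} {V : Set ℂ} (hV : IsOpen V)
    (Z : Finset ℂ) (hZ : ∀ z ∈ V, (g z = 0 ↔ z ∈ Z)) {z₀ : ℂ} (hz₀ : z₀ ∈ V)
    (hg : AnalyticAt ℂ g z₀) : analyticOrderAt g z₀ ≠ ⊤ := by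
  intro htop
  rw [analyticOrderAt_eq_top] at htop
  have hmem : V ∩ {z | g z = 0} ∈ 𝓝 z₀ := Filter.inter_mem (hV.mem_nhds hz₀) htop
  have hinf : (V ∩ {z | g z = 0}).Infinite := infinite_of_mem_nhds z₀ hmem
  exact hinf (Z.finite_toSet.subset fun z hz => (hZ z hz.1).mp hz.2)

lemma exists_factor {g : ℂ → ℂ} {z₀ : ℂ} (hg : AnalyticAt ℂ g z₀) (h : analyticOrderAt g z₀ ≠ ⊤) :
    ∃ w : ℂ → ℂ, AnalyticAt ℂ w z₀ ∧ w z₀ ≠ 0 ∧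
      ∀ᶠ z in 𝓝 z₀, g z = (z - z₀) ^ (ordAt g z₀) * w z := by
  have h1 : analyticOrderAt g z₀ = (((analyticOrderAt g z₀).toNat : ℕ) : ℕ∞) := (ENat.coe_toNat h).symm
  obtain ⟨w, hw, hw0, hev⟩ := (hg.analyticOrderAt_eq_natCast).mp h1
  refine ⟨w, hw, hw0, ?_⟩
  rw [ordAt_eq_toNat hg]
  simpa [smul_eq_mul] using hev

lemma logDeriv_differentiableAt {g : ℂ → ℂ} {V : Set ℂ} (hV : IsOpen V)
    (hg : AnalyticOnNhd ℂ g V) {z : ℂ} (hz : z ∈ V) (h0 : g z ≠ 0) :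
    DifferentiableAt ℂ (logDeriv g) z := by
  have hld : logDeriv g = fun y => deriv g y / g y := funext fun y => logDeriv_apply g y
  rw [hld]
  exact ((hg.deriv z hz).div (hg z hz) h0).differentiableAt

/-- The argument principle for a closed disk, by induction on the (finite) zero set. -/
lemma argPrinciple (c : ℂ) (ρ : ℝ) (hρ : 0 < ρ) (Z : Finset ℂ) :
    ∀ (g : ℂ → ℂ) (V : Set ℂ), IsOpen V → closedBall c ρ ⊆ V →
      AnalyticOnNhd ℂ g V → (∀ z ∈ V, (g z = 0 ↔ z ∈ Z)) → ↑Z ⊆ ball c ρ →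
      (∮ z in C(c, ρ), logDeriv g z)
        = (2 * Real.pi * Complex.I) * ∑ z ∈ Z, (ordAt g z : ℂ) := by
  induction Z using Finset.strongInduction with
  | _ Z ih =>
  intro g V hV hBV hg hZ hZb
  rcases Z.eq_empty_or_nonempty with rfl | hZne
  · have h0 : ∀ z ∈ V, g z ≠ 0 := fun z hz hg0 => by simpa using (hZ z hz).mp hg0
    have hzero : (∮ z in C(c, ρ), logDeriv g z) = 0 :=
      Complex.circleIntegral_eq_zero_of_differentiable_on_off_countable hρ.le
        Set.countable_empty
        (fun z hz =>
          (logDeriv_differentiableAt hV hg (hBV hz) (h0 _ (hBV hz))).continuousAt.continuousWithinAt)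
        (fun z hz =>
          logDeriv_differentiableAt hV hg (hBV (ball_subset_closedBall hz.1))
            (h0 _ (hBV (ball_subset_closedBall hz.1))))
    simp [hzero]
  · obtain ⟨z₀, hz₀Z⟩ := hZne
    have hz₀b : z₀ ∈ ball c ρ := hZb hz₀Z
    have hz₀V : z₀ ∈ V := hBV (ball_subset_closedBall hz₀b)
    have hA : AnalyticAt ℂ g z₀ := hg z₀ hz₀V
    have hAtop : analyticOrderAt g z₀ ≠ ⊤ := order_ne_top_of_finiteZeros hV Z hZ hz₀V hA
    obtain ⟨w, hw, hw0, hev⟩ := exists_factor hA hAtop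
    set m := ordAt g z₀ with hm
    have hgz₀ : g z₀ = 0 := (hZ z₀ hz₀V).mpr hz₀Z
    have hm0 : m ≠ 0 := by
      intro hme
      have hself := hev.self_of_nhds
      rw [hme] at hself
      simp only [pow_zero, one_mul] at hself
      apply hw0
      rw [← hself]
      exact hgz₀
    -- the function with the zero at z₀ divided out
    set g₁ : ℂ → ℂ := fun z => if z = z₀ then w z₀ else g z / (z - z₀) ^ m with hg₁def
    have hgfac : ∀ z, g z = (z - z₀) ^ m * g₁ z := by
      intro z
      by_cases hzz : z = z₀
      · subst hzz; simp [hg₁def, hgz₀, zero_pow hm0]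
      · simp only [hg₁def, if_neg hzz]
        rw [mul_comm, div_mul_cancel₀ _ (pow_ne_zero _ (sub_ne_zero.2 hzz))]
    have hg₁ : AnalyticOnNhd ℂ g₁ V := by
      intro z hzV
      by_cases hzz : z = z₀
      · rw [hzz]
        apply hw.congr
        filter_upwards [hev] with y hy
        by_cases hyy : y = z₀
        · simp [hg₁def, hyy]
        · simp only [hg₁def, if_neg hyy]
          rw [hy, mul_comm, mul_div_assoc, div_self (pow_ne_zero _ (sub_ne_zero.2 hyy)),
            mul_one]
      · have hA' : AnalyticAt ℂ (fun y => g y / (y - z₀) ^ m) z :=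
          (hg z hzV).div ((analyticAt_id.sub analyticAt_const).pow m)
            (pow_ne_zero _ (sub_ne_zero.2 hzz))
        apply hA'.congr
        filter_upwards [eventually_ne_nhds hzz] with y hy
        simp [hg₁def, if_neg hy]
    have hZ₁ : ∀ z ∈ V, (g₁ z = 0 ↔ z ∈ Z.erase z₀) := by
      intro z hzV
      by_cases hzz : z = z₀
      · subst hzz; simp [hg₁def, hw0, Finset.mem_erase]
      · have hp : (z - z₀) ^ m ≠ 0 := pow_ne_zero _ (sub_ne_zero.2 hzz)
        simp only [hg₁def, if_neg hzz]
        rw [div_eq_zero_iff, or_iff_left hp, hZ z hzV, Finset.mem_erase, and_iff_right hzz]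
    have hord : ∀ z ∈ Z.erase z₀, ordAt g₁ z = ordAt g z := by
      intro z hz
      obtain ⟨hzne, hzZ⟩ := Finset.mem_erase.mp hz
      have hzV : z ∈ V := hBV (ball_subset_closedBall (hZb hzZ))
      have hAz : AnalyticAt ℂ g z := hg z hzV
      have htop : analyticOrderAt g z ≠ ⊤ := order_ne_top_of_finiteZeros hV Z hZ hzV hAz
      obtain ⟨v, hv, hv0, hevv⟩ := exists_factor hAz htop
      have hA₁ : AnalyticAt ℂ g₁ z := hg₁ z hzV
      have hp0 : (z - z₀) ^ m ≠ 0 := pow_ne_zero _ (sub_ne_zero.2 hzne)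
      have h₁ord : analyticOrderAt g₁ z = ((ordAt g z : ℕ) : ℕ∞) := by
        rw [hA₁.analyticOrderAt_eq_natCast]
        refine ⟨fun y => v y / (y - z₀) ^ m,
          hv.div ((analyticAt_id.sub analyticAt_const).pow m) hp0,
          div_ne_zero hv0 hp0, ?_⟩
        filter_upwards [hevv, eventually_ne_nhds hzne] with y hy hyne
        simp only [hg₁def, if_neg hyne, smul_eq_mul]
        rw [hy, mul_div_assoc]
      rw [ordAt_eq_toNat hA₁, h₁ord, ENat.toNat_coe]
    have hsV : ∀ z ∈ sphere c ρ, z ∈ V := fun z hz => hBV (sphere_subset_closedBall hz)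
    have hsb : ∀ z ∈ sphere c ρ, z ∉ ball c ρ := by
      intro z hz hzb
      rw [mem_sphere] at hz
      rw [mem_ball] at hzb
      linarith
    have hgs : ∀ z ∈ sphere c ρ, g z ≠ 0 := fun z hz h0 =>
      hsb z hz (hZb ((hZ z (hsV z hz)).mp h0))
    have hg₁s : ∀ z ∈ sphere c ρ, g₁ z ≠ 0 := fun z hz h0 =>
      hsb z hz (hZb (Finset.erase_subset _ _ ((hZ₁ z (hsV z hz)).mp h0)))
    have hzs : ∀ z ∈ sphere c ρ, z ≠ z₀ := fun z hz h => hsb z hz (h ▸ hz₀b)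
    have hlog : Set.EqOn (logDeriv g)
        (fun z => (m : ℂ) * (z - z₀)⁻¹ + logDeriv g₁ z) (sphere c ρ) := by
      intro z hz
      have hzV := hsV z hz
      have h1 : logDeriv g z = logDeriv (fun y => (y - z₀) ^ m) z + logDeriv g₁ z := by
        rw [show g = fun y => (y - z₀) ^ m * g₁ y from funext hgfac]
        exact logDeriv_mul z (pow_ne_zero _ (sub_ne_zero.2 (hzs z hz))) (hg₁s z hz)
          ((differentiableAt_id.sub_const z₀).pow m) (hg₁ z hzV).differentiableAt
      rw [h1]
      have h2 : logDeriv (fun y => (y - z₀) ^ m) z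
          = (m : ℂ) * logDeriv (fun y => y - z₀) z :=
        logDeriv_fun_pow (differentiableAt_id.sub_const z₀) m
      simp only [h2, logDeriv_apply]
      have h3 : deriv (fun y : ℂ => y - z₀) z = 1 := by
        simp [deriv_sub_const]
      rw [h3, one_div]
    have hint1 : CircleIntegrable (fun z => (m : ℂ) * (z - z₀)⁻¹) c ρ := by
      apply ContinuousOn.circleIntegrable hρ.le
      exact continuousOn_const.mul ((continuousOn_id.sub continuousOn_const).inv₀
        fun z hz => sub_ne_zero.2 (hzs z hz))
    have hint2 : CircleIntegrable (logDeriv g₁) c ρ := by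
      apply ContinuousOn.circleIntegrable hρ.le
      exact fun z hz =>
        (logDeriv_differentiableAt hV hg₁ (hsV z hz) (hg₁s z hz)).continuousAt.continuousWithinAt
    have hih := ih (Z.erase z₀) (Finset.erase_ssubset hz₀Z) g₁ V hV hBV hg₁ hZ₁
      (fun z hz => hZb (Finset.erase_subset _ _ hz))
    calc (∮ z in C(c, ρ), logDeriv g z)
        = ∮ z in C(c, ρ), ((m : ℂ) * (z - z₀)⁻¹ + logDeriv g₁ z) :=
          circleIntegral.integral_congr hρ.le hlog
      _ = (∮ z in C(c, ρ), (m : ℂ) * (z - z₀)⁻¹) + ∮ z in C(c, ρ), logDeriv g₁ z :=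
          by simp only [circleIntegral, smul_add,
            intervalIntegral.integral_add hint1.out hint2.out]
      _ = (m : ℂ) * (2 * Real.pi * Complex.I)
            + (2 * Real.pi * Complex.I) * ∑ z ∈ Z.erase z₀, (ordAt g₁ z : ℂ) := by
          rw [circleIntegral.integral_const_mul,
            circleIntegral.integral_sub_inv_of_mem_ball hz₀b, hih]
      _ = (2 * Real.pi * Complex.I) * ∑ z ∈ Z, (ordAt g z : ℂ) := by
          rw [Finset.sum_congr rfl (fun z hz => by rw [hord z hz])]
          rw [← Finset.add_sum_erase Z (fun z => (ordAt g z : ℂ)) hz₀Z]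
          ring

/-- Around a closed disk on whose boundary `g` has no zeros, there is a slightly larger
open ball in which the zero set of `g` is a finite subset of the open disk. -/
lemma exists_good_nbhd (g : ℂ → ℂ) (c : ℂ) (ρ : ℝ) (hρ : 0 < ρ) (U : Set ℂ) (hU : IsOpen U)
    (hBU : closedBall c ρ ⊆ U) (hg : AnalyticOnNhd ℂ g U)
    (hs : ∀ z ∈ sphere c ρ, g z ≠ 0) :
    ∃ (V : Set ℂ) (Z : Finset ℂ), IsOpen V ∧ closedBall c ρ ⊆ V ∧ V ⊆ U ∧
      (∀ z ∈ V, (g z = 0 ↔ z ∈ Z)) ∧ ↑Z ⊆ ball c ρ := by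
  obtain ⟨δ, δpos, hδ⟩ := (isCompact_closedBall c ρ).exists_cthickening_subset_open hU hBU
  have hWU : ball c (δ + ρ) ⊆ U := by
    refine Subset.trans ball_subset_closedBall ?_
    rw [← cthickening_closedBall δpos.le hρ.le]
    exact hδ
  have hgW : AnalyticOnNhd ℂ g (ball c (δ + ρ)) := hg.mono hWU
  obtain ⟨zs, hzs⟩ : (sphere c ρ).Nonempty := NormedSpace.sphere_nonempty.mpr hρ.le
  have hzsW : zs ∈ ball c (δ + ρ) := by
    rw [mem_sphere] at hzs
    rw [mem_ball, hzs]
    linarith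
  have horder : ∀ z ∈ ball c (δ + ρ), ¬ (∀ᶠ y in 𝓝 z, g y = 0) := by
    intro z hz hev
    have heq := hgW.eqOn_zero_of_preconnected_of_eventuallyEq_zero
      (convex_ball c (δ + ρ)).isPreconnected hz (by filter_upwards [hev] with y hy using hy)
    exact hs zs hzs (heq hzsW)
  have hCW : closedBall c (ρ + δ / 2) ⊆ ball c (δ + ρ) := by
    intro z hz
    rw [mem_closedBall] at hz
    rw [mem_ball]
    linarith
  set S := {z | z ∈ closedBall c (ρ + δ / 2) ∧ g z = 0} with hSdef
  have hSW : ∀ z ∈ S, z ∈ ball c (δ + ρ) := fun z hz => hCW hz.1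
  have hSclosed : IsClosed S := by
    have hSeq : S = closedBall c (ρ + δ / 2) ∩ g ⁻¹' {0} := by
      ext z; simp [hSdef]
    rw [hSeq]
    exact ContinuousOn.preimage_isClosed_of_isClosed
      (fun z hz => (hg z (hWU (hCW hz))).continuousAt.continuousWithinAt)
      Metric.isClosed_closedBall isClosed_singleton
  have hScpt : IsCompact S :=
    (isCompact_closedBall c (ρ + δ / 2)).of_isClosed_subset hSclosed (fun z hz => hz.1)
  have hSdisc : DiscreteTopology S := by
    rw [discreteTopology_subtype_iff]
    intro x hx
    have hA := hg x (hWU (hSW x hx))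
    have hx' : ∀ᶠ y in 𝓝[≠] x, g y ≠ 0 :=
      hA.eventually_eq_zero_or_eventually_ne_zero.resolve_left (horder x (hSW x hx))
    rw [inf_principal_eq_bot]
    filter_upwards [hx'] with y hy
    exact fun hyS => hy hyS.2
  have hSfin : S.Finite := hScpt.finite (isDiscrete_iff_discreteTopology.mpr hSdisc)
  obtain ⟨ε, εpos, εle, hεS⟩ :
      ∃ ε : ℝ, 0 < ε ∧ ε ≤ δ / 2 ∧ ∀ z ∈ S, z ∉ ball c ρ → ρ + ε ≤ dist z c := by
    set F := hSfin.toFinset.filter (fun z => z ∉ ball c ρ) with hF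
    have hFd : ∀ z ∈ F, ρ < dist z c := by
      intro z hzF
      rw [hF, Finset.mem_filter, hSfin.mem_toFinset] at hzF
      obtain ⟨hzS, hznb⟩ := hzF
      have h1 : ρ ≤ dist z c := by
        rw [mem_ball, not_lt] at hznb
        exact hznb
      rcases h1.lt_or_eq with h | h
      · exact h
      · exact ((hs z (by rw [mem_sphere, ← h]) hzS.2)).elim
    rcases F.eq_empty_or_nonempty with hFe | hFne
    · refine ⟨δ / 2, by linarith, le_refl _, ?_⟩
      intro z hz hzb
      have : z ∈ F := by
        rw [hF, Finset.mem_filter, hSfin.mem_toFinset]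
        exact ⟨hz, hzb⟩
      rw [hFe] at this
      simp at this
    · set ε0 := F.inf' hFne (fun z => dist z c - ρ) with hε0
      have hpos : 0 < ε0 := by
        rw [hε0, Finset.lt_inf'_iff]
        intro z hzF
        have := hFd z hzF
        linarith
      refine ⟨min (δ / 2) ε0, lt_min (by linarith) hpos, min_le_left _ _, ?_⟩
      intro z hzS hznb
      have hzF : z ∈ F := by
        rw [hF, Finset.mem_filter, hSfin.mem_toFinset]
        exact ⟨hzS, hznb⟩
      have h1 : ε0 ≤ dist z c - ρ := Finset.inf'_le _ hzF
      have h2 : min (δ / 2) ε0 ≤ ε0 := min_le_right _ _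
      linarith
  refine ⟨ball c (ρ + ε), hSfin.toFinset.filter (fun z => z ∈ ball c ρ), isOpen_ball,
    ?_, ?_, ?_, ?_⟩
  · intro z hz
    rw [mem_closedBall] at hz
    rw [mem_ball]
    linarith
  · intro z hz
    apply hWU
    rw [mem_ball] at hz ⊢
    linarith
  · intro z hzV
    rw [mem_ball] at hzV
    constructor
    · intro h0
      have hzS : z ∈ S := ⟨by rw [mem_closedBall]; linarith, h0⟩
      have hzb : z ∈ ball c ρ := by
        by_contra hnb
        have := hεS z hzS hnb
        linarith
      rw [Finset.mem_filter, hSfin.mem_toFinset]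
      exact ⟨hzS, hzb⟩
    · intro hzZ
      rw [Finset.mem_filter, hSfin.mem_toFinset] at hzZ
      exact hzZ.1.2
  · intro z hz
    rw [Finset.mem_coe, Finset.mem_filter] at hz
    exact hz.2

lemma zeroCount_eq (g : ℂ → ℂ) (c : ℂ) (ρ : ℝ) (V : Set ℂ) (hBV : closedBall c ρ ⊆ V)
    (hg : AnalyticOnNhd ℂ g V) (Z : Finset ℂ)
    (hZ : ∀ z ∈ V, (g z = 0 ↔ z ∈ Z)) (hZb : ↑Z ⊆ ball c ρ) :
    zeroCount g (ball c ρ) = ∑ z ∈ Z, ordAt g z := by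
  rw [zeroCount_def]
  apply finsum_mem_eq_sum_of_inter_support_eq
  ext z
  simp only [Set.mem_inter_iff, Function.mem_support, Finset.mem_coe]
  constructor
  · rintro ⟨hzb, hzsupp⟩
    have hzV : z ∈ V := hBV (ball_subset_closedBall hzb)
    refine ⟨?_, hzsupp⟩
    by_contra hzZ
    have hgz : g z ≠ 0 := fun h0 => hzZ ((hZ z hzV).mp h0)
    exact hzsupp (ordAt_eq_zero (hg z hzV) hgz)
  · rintro ⟨hzZ, hzsupp⟩
    exact ⟨hZb hzZ, hzsupp⟩

/-- Ostrowski's lemma: if `f + t·h` is zero-free on the boundary circle of a closed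
disk for every `t ∈ [a, b]`, then the number of its zeros inside the disk, counted
with multiplicity, does not depend on `t ∈ [a, b]`. -/
theorem ostrowski (f h : ℂ → ℂ) (c : ℂ) (ρ : ℝ) (hρ : 0 < ρ)
    (U : Set ℂ) (hU : IsOpen U) (hBU : Metric.closedBall c ρ ⊆ U)
    (hf : DifferentiableOn ℂ f U) (hh : DifferentiableOn ℂ h U)
    (a b : ℝ) (hab : a < b)
    (hne : ∀ t ∈ Set.Icc a b, ∀ z ∈ Metric.sphere c ρ, f z + (t : ℂ) * h z ≠ 0) :
    ∀ t₁ ∈ Set.Icc a b, ∀ t₂ ∈ Set.Icc a b,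
      zeroCount (fun z => f z + (t₁ : ℂ) * h z) (Metric.ball c ρ) =
      zeroCount (fun z => f z + (t₂ : ℂ) * h z) (Metric.ball c ρ) := by
  have hfa : AnalyticOnNhd ℂ f U := hf.analyticOnNhd hU
  have hha : AnalyticOnNhd ℂ h U := hh.analyticOnNhd hU
  set g : ℝ → ℂ → ℂ := fun t z => f z + (t : ℂ) * h z with hgdef
  have hganal : ∀ t : ℝ, AnalyticOnNhd ℂ (g t) U := fun t =>
    hfa.add (analyticOnNhd_const.mul hha)
  set N : ℝ → ℕ := fun t => zeroCount (g t) (ball c ρ) with hNdef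
  -- the argument-principle identity
  have key : ∀ t ∈ Set.Icc a b,
      (∮ z in C(c, ρ), logDeriv (g t) z) = (2 * Real.pi * Complex.I) * (N t : ℂ) := by
    intro t ht
    obtain ⟨V, Z, hV, hBV, hVU, hZiff, hZbal⟩ :=
      exists_good_nbhd (g t) c ρ hρ U hU hBU (hganal t) (fun z hz => hne t ht z hz)
    rw [argPrinciple c ρ hρ Z (g t) V hV hBV ((hganal t).mono hVU) hZiff hZbal]
    simp only [hNdef]
    rw [zeroCount_eq (g t) c ρ V hBV ((hganal t).mono hVU) Z hZiff hZbal]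
    push_cast
    ring
  -- continuity of the integral in the parameter
  have hder : ∀ t : ℝ, ∀ z ∈ U, deriv (g t) z = deriv f z + (t : ℂ) * deriv h z := by
    intro t z hz
    have h1 : DifferentiableAt ℂ f z := hf.differentiableAt (hU.mem_nhds hz)
    have h2 : DifferentiableAt ℂ h z := hh.differentiableAt (hU.mem_nhds hz)
    rw [hgdef]
    rw [deriv_fun_add h1 (h2.const_mul _), deriv_const_mul _ h2]
  have hsphU : ∀ θ : ℝ, circleMap c ρ θ ∈ U := fun θ =>
    hBU (sphere_subset_closedBall (circleMap_mem_sphere c hρ.le θ))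
  set X := Set.Icc a b with hX
  set F : X → ℝ → ℂ := fun x θ =>
    (circleMap 0 ρ θ * Complex.I) *
      ((deriv f (circleMap c ρ θ) + (x : ℂ) * deriv h (circleMap c ρ θ)) /
        (f (circleMap c ρ θ) + (x : ℂ) * h (circleMap c ρ θ))) with hFdef
  have hFeq : ∀ x : X, (∮ z in C(c, ρ), logDeriv (g (x : ℝ)) z)
      = ∫ θ in (0 : ℝ)..(2 * Real.pi), F x θ := by
    intro x
    rw [show (∮ z in C(c, ρ), logDeriv (g (x : ℝ)) z)
        = ∫ θ in (0:ℝ)..(2 * Real.pi), deriv (circleMap c ρ) θ • logDeriv (g (x : ℝ)) (circleMap c ρ θ) from rfl]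
    apply intervalIntegral.integral_congr
    intro θ _
    rw [hFdef]
    simp only [deriv_circleMap, smul_eq_mul]
    congr 1
    rw [logDeriv_apply, hder (x : ℝ) _ (hsphU θ)]
  have hFc : Continuous (Function.uncurry F) := by
    have hzc : Continuous fun p : X × ℝ => circleMap c ρ p.2 :=
      (continuous_circleMap c ρ).comp continuous_snd
    have hxc : Continuous fun p : X × ℝ => ((p.1 : ℝ) : ℂ) :=
      Complex.continuous_ofReal.comp (continuous_subtype_val.comp continuous_fst)
    have hcf : Continuous fun p : X × ℝ => f (circleMap c ρ p.2) :=
      (hfa.continuousOn).comp_continuous hzc fun p => hsphU p.2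
    have hch : Continuous fun p : X × ℝ => h (circleMap c ρ p.2) :=
      (hha.continuousOn).comp_continuous hzc fun p => hsphU p.2
    have hcdf : Continuous fun p : X × ℝ => deriv f (circleMap c ρ p.2) :=
      ((hfa.deriv).continuousOn).comp_continuous hzc fun p => hsphU p.2
    have hcdh : Continuous fun p : X × ℝ => deriv h (circleMap c ρ p.2) :=
      ((hha.deriv).continuousOn).comp_continuous hzc fun p => hsphU p.2
    have hden : ∀ p : X × ℝ,
        f (circleMap c ρ p.2) + ((p.1 : ℝ) : ℂ) * h (circleMap c ρ p.2) ≠ 0 := fun p =>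
      hne (p.1 : ℝ) p.1.2 _ (circleMap_mem_sphere c hρ.le p.2)
    exact (((continuous_circleMap 0 ρ).comp continuous_snd).mul continuous_const).mul
      ((hcdf.add (hxc.mul hcdh)).div (hcf.add (hxc.mul hch)) hden)
  have hIc : Continuous fun x : X => ∮ z in C(c, ρ), logDeriv (g (x : ℝ)) z := by
    have := intervalIntegral.continuous_parametric_intervalIntegral_of_continuous'
      (μ := MeasureTheory.volume) hFc 0 (2 * Real.pi)
    exact this.congr fun x => (hFeq x).symm
  -- the (real part of the normalized) integral is the zero count
  have hpi : (2 * Real.pi * Complex.I) ≠ 0 := by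
    simp [Real.pi_ne_zero, Complex.I_ne_zero]
  set ψ : X → ℝ := fun x => (((2 * Real.pi * Complex.I))⁻¹ *
    ∮ z in C(c, ρ), logDeriv (g (x : ℝ)) z).re with hψdef
  have hψc : Continuous ψ := Complex.continuous_re.comp (continuous_const.mul hIc)
  have hψval : ∀ x : X, ψ x = (N (x : ℝ) : ℝ) := by
    intro x
    rw [hψdef]
    simp only
    rw [key (x : ℝ) x.2, inv_mul_cancel_left₀ hpi]
    simp
  -- a continuous integer-valued function on a connected space is constant
  haveI : PreconnectedSpace X := Subtype.preconnectedSpace isPreconnected_Icc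
  have hconst : ∀ x y : X, N (x : ℝ) = N (y : ℝ) := by
    have hlt : ∀ x y : X, ¬ (N (x : ℝ) < N (y : ℝ)) := by
      intro x y hxy
      have hmem : (N (x : ℝ) : ℝ) + 1 / 2 ∈ Set.Icc (ψ x) (ψ y) := by
        rw [hψval x, hψval y]
        constructor
        · linarith
        · have : (N (x : ℝ) : ℝ) + 1 ≤ (N (y : ℝ) : ℝ) := by
            exact_mod_cast Nat.succ_le_of_lt hxy
          linarith
      obtain ⟨z, hz⟩ := intermediate_value_univ x y hψc hmem
      rw [hψval z] at hz
      have h2 : ((2 * N (z : ℝ) : ℕ) : ℝ) = ((2 * N (x : ℝ) + 1 : ℕ) : ℝ) := by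
        push_cast
        linarith
      have h3 : 2 * N (z : ℝ) = 2 * N (x : ℝ) + 1 := Nat.cast_injective h2
      omega
    intro x y
    rcases lt_trichotomy (N (x : ℝ)) (N (y : ℝ)) with hc | hc | hc
    · exact absurd hc (hlt x y)
    · exact hc
    · exact absurd hc (hlt y x)
  intro t₁ ht₁ t₂ ht₂
  exact hconst ⟨t₁, ht₁⟩ ⟨t₂, ht₂⟩
end

section
/- Under the hypotheses of the previous setup (monic g of degree n, 1 ≤ k ≤ n-1, A_k = Σ_{j≠k} |a_j| ≤ (1 - ε/n)(ε/(n+ε))^{n-k} |a_k|^{1/(n-k)}), every positive root R of the polynomial x^n - |a_k| x^k + Σ_{j≠k,n} |a_j| x^j that exceeds 1 satisfies (1 - ε/n)|a_k|^{1/(n-k)} ≤ R ≤ |a_k|^{1/(n-k)}. -/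
open Finset

set_option maxHeartbeats 1000000

theorem stmt4 (n k : ℕ) (hn : 2 ≤ n) (hk1 : 1 ≤ k) (hk2 : k ≤ n - 1)
    (a : ℕ → ℂ) (han : a n = 1) (ha0 : a 0 ≠ 0)
    (ε : ℝ) (hε : 0 < ε)
    (hA : ∑ j ∈ (Finset.range (n + 1)).erase k, ‖a j‖ ≤
      (1 - ε / n) * (ε / (n + ε)) ^ (n - k) *
        (‖a k‖) ^ ((1 : ℝ) / ((n : ℝ) - k)))
    (R : ℝ) (hR : 1 < R)
    (hroot : R ^ n - ‖a k‖ * R ^ k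
      + ∑ j ∈ (Finset.range n).erase k, ‖a j‖ * R ^ j = 0) :
    (1 - ε / n) * (‖a k‖) ^ ((1 : ℝ) / ((n : ℝ) - k)) ≤ R ∧
      R ≤ (‖a k‖) ^ ((1 : ℝ) / ((n : ℝ) - k)) := by
  have hkn : k ≤ n := by omega
  set m := n - k with hm
  have hm1 : 1 ≤ m := by omega
  have hmk : m + k = n := by omega
  have hR0 : (0:ℝ) < R := lt_trans one_pos hR
  set B := ‖a k‖ with hBdef
  have hB0 : 0 ≤ B := norm_nonneg _
  set S := ∑ j ∈ (Finset.range n).erase k, ‖a j‖ * R ^ j with hSdef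
  have hS0 : 0 ≤ S :=
    Finset.sum_nonneg fun j _ => mul_nonneg (norm_nonneg _) (by positivity)
  have heq : R ^ n + S = B * R ^ k := by linarith
  have hRk : (0:ℝ) < R ^ k := by positivity
  have hRmB : R ^ m ≤ B := by
    have h1 : R ^ m * R ^ k ≤ B * R ^ k := by
      rw [← pow_add, hmk]; linarith
    exact le_of_mul_le_mul_right h1 hRk
  have hRm1' : (1:ℝ) < R ^ m := one_lt_pow₀ hR (by omega)
  have hB1 : 1 < B := lt_of_lt_of_le hRm1' hRmB
  have hcastm : ((n:ℝ) - k) = (m:ℝ) := by rw [hm, Nat.cast_sub hkn]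
  set c := B ^ ((1 : ℝ) / ((n : ℝ) - k)) with hcdef
  have hcpos : 0 < c := Real.rpow_pos_of_pos (by linarith) _
  have hcm : c ^ m = B := by
    rw [hcdef, hcastm, one_div]
    exact Real.rpow_inv_natCast_pow hB0 (by omega)
  -- upper bound
  have hRc : R ≤ c := by
    by_contra h
    push_neg at h
    have : c ^ m < R ^ m := pow_lt_pow_left₀ h hcpos.le (by omega)
    rw [hcm] at this
    linarith
  refine ⟨?_, hRc⟩
  -- lower bound
  rcases le_or_gt (1 - ε / n) 0 with h1 | h1
  · nlinarith [hcpos.le]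
  by_contra hcon
  push_neg at hcon
  set A := ∑ j ∈ (Finset.range (n + 1)).erase k, ‖a j‖ with hAdef
  have hA0 : 0 ≤ A := Finset.sum_nonneg fun j _ => norm_nonneg _
  have hSle : S ≤ A * R ^ (n - 1) := by
    calc S ≤ ∑ j ∈ (Finset.range n).erase k, ‖a j‖ * R ^ (n - 1) := by
          apply Finset.sum_le_sum
          intro j hj
          have hj' : j ≤ n - 1 := by
            have := Finset.mem_range.mp (Finset.mem_of_mem_erase hj); omega
          exact mul_le_mul_of_nonneg_left (pow_le_pow_right₀ hR.le hj') (norm_nonneg _)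
      _ = (∑ j ∈ (Finset.range n).erase k, ‖a j‖) * R ^ (n - 1) := by
          rw [Finset.sum_mul]
      _ ≤ A * R ^ (n - 1) := by
          apply mul_le_mul_of_nonneg_right _ (by positivity)
          apply Finset.sum_le_sum_of_subset_of_nonneg
          · exact Finset.erase_subset_erase _ (Finset.range_subset_range.mpr (by omega))
          · intros; exact norm_nonneg _
  have hkey : B ≤ R ^ m + A * R ^ (m - 1) := by
    have h2 : B * R ^ k ≤ (R ^ m + A * R ^ (m - 1)) * R ^ k := by
      rw [add_mul, ← pow_add, hmk, mul_assoc, ← pow_add]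
      have hmm : m - 1 + k = n - 1 := by omega
      rw [hmm]
      linarith
    exact le_of_mul_le_mul_right h2 hRk
  have hRm : R ^ m < ((1 - ε / n) * c) ^ m := pow_lt_pow_left₀ hcon hR0.le (by omega)
  have hRm1 : R ^ (m - 1) ≤ c ^ (m - 1) := pow_le_pow_left₀ hR0.le hRc _
  have hcm1 : (0:ℝ) < c ^ (m - 1) := by positivity
  have hsplit : c ^ m = c * c ^ (m - 1) := by
    rw [mul_comm, ← pow_succ]
    congr 1
    omega
  -- numeric inequalities
  have hnpos : (0:ℝ) < n := by positivity
  have ht1 : ε / n < 1 := by linarith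
  have htpos : 0 < ε / n := div_pos hε hnpos
  have hu0 : (0:ℝ) ≤ ε / (n + ε) := by positivity
  have hu1 : ε / (n + ε) ≤ 1 := by
    rw [div_le_one (by linarith)]; linarith
  have hum : (ε / (n + ε)) ^ m ≤ ε / (n + ε) := pow_le_of_le_one hu0 hu1 (by omega)
  have hut : ε / (n + ε) ≤ ε / n := by
    apply div_le_div_of_nonneg_left hε.le hnpos
    linarith
  have hpm : (1 - ε / n) ^ m ≤ 1 - ε / n :=
    pow_le_of_le_one h1.le (by linarith) (by omega)
  -- combine
  have hmulm : ((1 - ε / n) * c) ^ m = (1 - ε / n) ^ m * c ^ m := mul_pow _ _ _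
  have hAc : A * R ^ (m - 1) ≤ A * c ^ (m - 1) :=
    mul_le_mul_of_nonneg_left hRm1 hA0
  have hRm' : R ^ m < (1 - ε / n) ^ m * B := by
    rw [← hcm, ← mul_pow]; exact hRm
  have hBlt : B < (1 - ε / n) ^ m * B + A * c ^ (m - 1) := by
    linarith
  have hBc : B = c * c ^ (m - 1) := by rw [← hcm]; exact hsplit
  have hA' : A ≤ (1 - ε / n) * (ε / (n + ε)) ^ m * c := hA
  clear hroot hA hcdef hBdef hSdef hAdef hSle heq hRmB hkey
  clear_value B S A c
  have hstep : (1 - (1 - ε / n) ^ m) * c < A := by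
    rw [hBc] at hBlt
    have h3 : (1 - (1 - ε / n) ^ m) * c * c ^ (m - 1) < A * c ^ (m - 1) := by
      nlinarith [hBlt]
    exact lt_of_mul_lt_mul_right h3 hcm1.le
  have hfinal : A ≤ (1 - (1 - ε / n) ^ m) * c := by
    refine le_trans hA' ?_
    apply mul_le_mul_of_nonneg_right _ hcpos.le
    nlinarith [hum, hut, hpm, pow_nonneg hu0 m]
  linarith
end

section
/- Let g(z) = z^n + Σ_{j=0}^{n-1} a_j z^j be monic of degree n, 1 ≤ k ≤ n-1, A_k = Σ_{j≠k} |a_j| (with a_n = 1), and suppose A_k ≤ (1 - ε/n)(ε/(n+ε))^{n-k} |a_k|^{1/(n-k)} for some ε > 0. If z_0 is a root of g with |z_0| > (1 - ε/n)|a_k|^{1/(n-k)}, then there exists a root w of z^{n-k} + a_k = 0 such that |z_0 - w| < (ε/n)|w|. -/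
open Finset

set_option maxHeartbeats 1000000

theorem stmt5 (n k : ℕ) (hn : 2 ≤ n) (hk1 : 1 ≤ k) (hk2 : k ≤ n - 1)
    (a : ℕ → ℂ) (ha0 : a 0 ≠ 0)
    (ε : ℝ) (hε : 0 < ε)
    (hA : (∑ j ∈ (Finset.range n).erase k, ‖a j‖) + 1 ≤
      (1 - ε / n) * (ε / (n + ε)) ^ (n - k) *
        ‖a k‖ ^ ((1 : ℝ) / ((n : ℝ) - k)))
    (z₀ : ℂ)
    (hroot : z₀ ^ n + ∑ j ∈ Finset.range n, a j * z₀ ^ j = 0)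
    (hz₀ : (1 - ε / n) * ‖a k‖ ^ ((1 : ℝ) / ((n : ℝ) - k)) < ‖z₀‖) :
    ∃ w : ℂ, w ^ (n - k) = -(a k) ∧ ‖z₀ - w‖ < ε / n * ‖w‖ := by
  have hkn : k < n := by omega
  set m := n - k with hm
  have hm0 : 0 < m := by omega
  have hcast : (n : ℝ) - k = (m : ℝ) := by
    rw [hm]; push_cast [Nat.cast_sub hkn.le]; ring
  set A := ∑ j ∈ (Finset.range n).erase k, ‖a j‖ with hAdef
  have hA0 : 0 ≤ A := Finset.sum_nonneg fun j _ => norm_nonneg _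
  set R := (‖a k‖) ^ ((1 : ℝ) / ((n : ℝ) - k)) with hRdef
  set δ := ε / n with hδdef
  have hn0 : (0:ℝ) < n := by positivity
  have hδ0 : 0 < δ := div_pos hε hn0
  have hRnn : 0 ≤ R := Real.rpow_nonneg (norm_nonneg _) _
  have hratio : ε / (↑n + ε) = δ / (1 + δ) := by
    rw [hδdef]
    rw [eq_div_iff (by positivity)]
    field_simp
  rw [hratio] at hA
  have hd1 : 0 < 1 - δ := by
    by_contra h
    push_neg at h
    have hp : (0:ℝ) < (δ / (1 + δ)) ^ m := by positivity
    have h1 : (1 - δ) * (δ / (1 + δ)) ^ m ≤ 0 := mul_nonpos_of_nonpos_of_nonneg (by linarith) hp.le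
    have h2 : (1 - δ) * (δ / (1 + δ)) ^ m * R ≤ 0 := mul_nonpos_of_nonpos_of_nonneg h1 hRnn
    linarith
  have hak : a k ≠ 0 := by
    intro h
    have hR0 : R = 0 := by
      rw [hRdef, h, norm_zero, Real.zero_rpow]
      rw [hcast]
      positivity
    rw [hR0, mul_zero] at hA
    linarith
  have habs : 0 < ‖a k‖ := norm_pos_iff.mpr hak
  have hR0 : 0 < R := Real.rpow_pos_of_pos habs _
  have hRm : R ^ m = ‖a k‖ := by
    rw [hRdef, hcast, ← Real.rpow_natCast (‖a k‖ ^ ((1:ℝ)/(m:ℝ))) m,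
      ← Real.rpow_mul (norm_nonneg _), one_div,
      inv_mul_cancel₀ (by positivity : ((m:ℝ)) ≠ 0), Real.rpow_one]
  have hx : (0:ℝ) < (δ / (1 + δ)) ^ m := by positivity
  have h2 : A + 1 ≤ (δ / (1 + δ)) ^ m * R := by
    nlinarith [mul_nonneg (mul_nonneg hδ0.le hx.le) hRnn]
  have hpow : (δ / (1 + δ)) ^ m * (1 + δ) ^ m = δ ^ m := by
    rw [← mul_pow, div_mul_cancel₀]
    positivity
  have hB : (A + 1) * (1 + δ) ^ m ≤ δ ^ m * R := by
    have h3 := mul_le_mul_of_nonneg_right h2 (by positivity : (0:ℝ) ≤ (1 + δ) ^ m)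
    calc (A + 1) * (1 + δ) ^ m ≤ (δ / (1 + δ)) ^ m * R * (1 + δ) ^ m := h3
      _ = (δ / (1 + δ)) ^ m * (1 + δ) ^ m * R := by ring
      _ = δ ^ m * R := by rw [hpow]
  have hC : A + 1 ≤ (1 - δ) * R := by
    have hle1 : (δ / (1 + δ)) ^ m ≤ 1 := by
      apply pow_le_one₀
      · positivity
      · rw [div_le_one (by linarith)]; linarith
    nlinarith [mul_le_mul_of_nonneg_right (mul_le_mul_of_nonneg_left hle1 hd1.le) hRnn]
  have hδR : A + 1 ≤ δ * R := by
    have h1 : δ ^ m ≤ δ := by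
      calc δ ^ m ≤ δ ^ 1 := pow_le_pow_of_le_one hδ0.le (by linarith) hm0
        _ = δ := pow_one δ
    have h2' : (1:ℝ) ≤ (1 + δ) ^ m := one_le_pow₀ (by linarith)
    nlinarith [mul_le_mul_of_nonneg_right h1 hR0.le, mul_le_mul_of_nonneg_left h2' (by linarith : (0:ℝ) ≤ A + 1)]
  have hz1 : 1 < ‖z₀‖ := by
    have h1 : (1:ℝ) ≤ (1 - δ) * R := by linarith
    linarith
  have hz0pos : 0 < ‖z₀‖ := by linarith
  -- the key polynomial identity
  have hsplit : z₀ ^ k * (z₀ ^ m + a k) = -∑ j ∈ (Finset.range n).erase k, a j * z₀ ^ j := by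
    have h1 : ∑ j ∈ Finset.range n, a j * z₀ ^ j
        = a k * z₀ ^ k + ∑ j ∈ (Finset.range n).erase k, a j * z₀ ^ j :=
      (Finset.add_sum_erase _ _ (Finset.mem_range.mpr hkn)).symm
    have h2 : z₀ ^ k * z₀ ^ m = z₀ ^ n := by
      rw [← pow_add]; congr 1; omega
    rw [h1] at hroot
    linear_combination hroot + h2
  have hub : (‖z₀‖) ^ k * ‖z₀ ^ m + a k‖
      ≤ A * (‖z₀‖) ^ (n - 1) := by
    have h3 : (‖z₀‖) ^ k * ‖z₀ ^ m + a k‖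
        = ‖∑ j ∈ (Finset.range n).erase k, a j * z₀ ^ j‖ := by
      rw [← norm_pow, ← norm_mul, hsplit, norm_neg]
    rw [h3]
    refine le_trans (norm_sum_le _ _) ?_
    rw [hAdef, Finset.sum_mul]
    refine Finset.sum_le_sum fun j hj => ?_
    rw [norm_mul, norm_pow]
    have hj' : j ≤ n - 1 := by
      have := Finset.mem_range.mp (Finset.mem_of_mem_erase hj); omega
    exact mul_le_mul_of_nonneg_left (pow_le_pow_right₀ hz1.le hj') (norm_nonneg _)
  have hub2 : ‖z₀ ^ m + a k‖ ≤ A * (‖z₀‖) ^ (m - 1) := by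
    have hpw : (‖z₀‖) ^ (n - 1) = (‖z₀‖) ^ k * (‖z₀‖) ^ (m - 1) := by
      rw [← pow_add]; congr 1; omega
    have hs : (0:ℝ) < (‖z₀‖) ^ k := by positivity
    refine le_of_mul_le_mul_left ?_ hs
    calc (‖z₀‖) ^ k * ‖z₀ ^ m + a k‖
        ≤ A * (‖z₀‖) ^ (n - 1) := hub
      _ = (‖z₀‖) ^ k * (A * (‖z₀‖) ^ (m - 1)) := by rw [hpw]; ring
  -- upper bound on |z₀|
  have hsub : ‖z₀‖ ≤ (1 + δ) * R := by
    by_contra h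
    push_neg at h
    have hRs : R ≤ ‖z₀‖ := by linarith [mul_pos hδ0 hR0]
    have hlow : (‖z₀‖) ^ m - R ^ m ≤ ‖z₀ ^ m + a k‖ := by
      have h4 : ‖z₀ ^ m‖ ≤ ‖z₀ ^ m + a k‖ + ‖a k‖ := by
        calc ‖z₀ ^ m‖ = ‖(z₀ ^ m + a k) + (-(a k))‖ := by ring_nf
          _ ≤ ‖z₀ ^ m + a k‖ + ‖-(a k)‖ := norm_add_le _ _
          _ = ‖z₀ ^ m + a k‖ + ‖a k‖ := by rw [norm_neg]
      rw [norm_pow] at h4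
      rw [← hRm] at h4
      linarith
    have hsm : (0:ℝ) < (‖z₀‖) ^ (m - 1) := by positivity
    have e1 : (‖z₀‖) ^ m - R ^ m ≤ A * (‖z₀‖) ^ (m - 1) := by
      linarith [hub2]
    have e2 : R ^ m ≤ R * (‖z₀‖) ^ (m - 1) := by
      have h5 : R ^ (m - 1) ≤ (‖z₀‖) ^ (m - 1) := pow_le_pow_left₀ hRnn hRs _
      calc R ^ m = R * R ^ (m - 1) := by rw [← pow_succ']; congr 1; omega
        _ ≤ R * (‖z₀‖) ^ (m - 1) := mul_le_mul_of_nonneg_left h5 hRnn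
    have e3 : (‖z₀‖) ^ m = ‖z₀‖ * (‖z₀‖) ^ (m - 1) := by
      rw [← pow_succ']; congr 1; omega
    have h11 : (‖z₀‖ - R) * (‖z₀‖) ^ (m - 1)
        ≤ A * (‖z₀‖) ^ (m - 1) := by linarith [e1, e2, e3]
    have e4 : ‖z₀‖ ≤ R + A := by
      have := le_of_mul_le_mul_right h11 hsm
      linarith
    linarith [hδR, mul_pos hδ0 hR0]
  -- the roots of z^m + a k
  obtain ⟨w₀, hw₀m⟩ := Complex.isAlgClosed.exists_pow_nat_eq (-(a k)) hm0
  have habs_eq : ∀ (x : ℂ) (r : ℝ), 0 ≤ r → (‖x‖) ^ m = r ^ m →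
      ‖x‖ = r := by
    intro x r hr h1
    by_contra hne
    rcases lt_or_gt_of_ne hne with hlt | hgt
    · have := pow_lt_pow_left₀ hlt (norm_nonneg x) (by omega : m ≠ 0)
      linarith
    · have := pow_lt_pow_left₀ hgt hr (by omega : m ≠ 0)
      linarith
  have hw₀abs : ‖w₀‖ = R := by
    apply habs_eq _ _ hRnn
    rw [← norm_pow, hw₀m, norm_neg, hRm]
  set ζ := Complex.exp (2 * Real.pi * Complex.I / m) with hζdef
  have hζ : IsPrimitiveRoot ζ m := Complex.isPrimitiveRoot_exp m (by omega)
  have hζ1 : ‖ζ‖ = 1 := by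
    apply habs_eq _ _ zero_le_one
    rw [← norm_pow, hζ.pow_eq_one, norm_one, one_pow]
  have hfac : z₀ ^ m + a k = ∏ i ∈ Finset.range m, (z₀ - ζ ^ i * w₀) := by
    have h6 := X_pow_sub_C_eq_prod hζ hm0 hw₀m
    have h7 := congrArg (Polynomial.eval z₀) h6
    simpa [Polynomial.eval_prod, sub_neg_eq_add] using h7
  -- by contradiction
  by_contra hcon
  push_neg at hcon
  have hprodge : (δ * R) ^ m ≤ ‖z₀ ^ m + a k‖ := by
    rw [hfac, norm_prod]
    calc (δ * R) ^ m = ∏ _i ∈ Finset.range m, (δ * R) := by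
          rw [Finset.prod_const, Finset.card_range]
      _ ≤ ∏ i ∈ Finset.range m, ‖z₀ - ζ ^ i * w₀‖ := by
          refine Finset.prod_le_prod (fun i _ => by positivity) fun i _ => ?_
          have hwi : (ζ ^ i * w₀) ^ m = -(a k) := by
            rw [mul_pow, ← pow_mul, mul_comm i m, pow_mul, hζ.pow_eq_one, one_pow, one_mul, hw₀m]
          have habsi : ‖ζ ^ i * w₀‖ = R := by
            rw [norm_mul, norm_pow, hζ1, one_pow, one_mul, hw₀abs]
          have := hcon _ hwi
          rw [habsi] at this
          exact this
  -- final contradiction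
  have hRm1 : (0:ℝ) < R ^ (m - 1) := by positivity
  have hDm1 : (0:ℝ) < (1 + δ) ^ (m - 1) := by positivity
  have e5 : R ^ m = R * R ^ (m - 1) := by rw [← pow_succ']; congr 1; omega
  have e6 : (1 + δ) ^ m = (1 + δ) * (1 + δ) ^ (m - 1) := by rw [← pow_succ']; congr 1; omega
  have hlast : δ ^ m * R ^ m ≤ A * ((1 + δ) ^ (m - 1) * R ^ (m - 1)) := by
    have h8 : (‖z₀‖) ^ (m - 1) ≤ ((1 + δ) * R) ^ (m - 1) :=
      pow_le_pow_left₀ (norm_nonneg _) hsub _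
    calc δ ^ m * R ^ m = (δ * R) ^ m := (mul_pow _ _ _).symm
      _ ≤ ‖z₀ ^ m + a k‖ := hprodge
      _ ≤ A * (‖z₀‖) ^ (m - 1) := hub2
      _ ≤ A * ((1 + δ) * R) ^ (m - 1) := mul_le_mul_of_nonneg_left h8 hA0
      _ = A * ((1 + δ) ^ (m - 1) * R ^ (m - 1)) := by rw [mul_pow]
  have e8 : (A + 1) * (1 + δ) ^ m * R ^ (m - 1) ≤ A * ((1 + δ) ^ (m - 1) * R ^ (m - 1)) := by
    have := mul_le_mul_of_nonneg_right hB hRm1.le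
    calc (A + 1) * (1 + δ) ^ m * R ^ (m - 1) ≤ δ ^ m * R * R ^ (m - 1) := this
      _ = δ ^ m * R ^ m := by rw [e5]; ring
      _ ≤ A * ((1 + δ) ^ (m - 1) * R ^ (m - 1)) := hlast
  nlinarith [e8, mul_pos hDm1 hRm1, mul_nonneg hA0 hδ0.le,
    mul_le_mul_of_nonneg_right (le_of_eq e6) hRm1.le]
end

section
/- Let ξ_0, …, ξ_n be complex numbers, not all zero, with ξ_0 ≠ 0 and ξ_n ≠ 0, and let τ be an index maximizing |ξ_j|. Fix δ > 0 and suppose |ξ_τ| > e^δ · Σ_{j≠τ} |ξ_j|. Then the polynomial G(z) = Σ_{j=0}^n ξ_j z^j has no roots z with e^{-δ/n} ≤ |z| ≤ e^{δ/n}. -/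
open Finset
theorem stmt12 (n : ℕ) (hn : 1 ≤ n) (ξ : ℕ → ℂ) (hξ0 : ξ 0 ≠ 0) (hξn : ξ n ≠ 0)
    (τ : ℕ) (hτ : τ ≤ n) (hmax : ∀ j ≤ n, ‖ξ j‖ ≤ ‖ξ τ‖)
    (δ : ℝ) (hδ : 0 < δ)
    (hbig : Real.exp δ * ∑ j ∈ (Finset.range (n + 1)).erase τ, ‖ξ j‖ <
      ‖ξ τ‖) :
    ∀ z : ℂ, Real.exp (-δ / n) ≤ ‖z‖ → ‖z‖ ≤ Real.exp (δ / n) →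
      ∑ j ∈ Finset.range (n + 1), ξ j * z ^ j ≠ 0 := by
  intro z hz1 hz2 hG
  set r := ‖z‖ with hrdef
  have hrpos : 0 < r := lt_of_lt_of_le (Real.exp_pos _) hz1
  have hnpos : (0:ℝ) < n := by exact_mod_cast hn
  have hτmem : τ ∈ Finset.range (n+1) := Finset.mem_range.mpr (Nat.lt_succ_of_le hτ)
  -- key pointwise bound
  have key : ∀ j ∈ (Finset.range (n+1)).erase τ,
      ‖ξ j * z ^ j‖ ≤ Real.exp δ * ‖ξ j‖ * r ^ τ := by
    intro j hj
    have hjn : j ≤ n := Nat.lt_succ_iff.mp (Finset.mem_range.mp (Finset.mem_of_mem_erase hj))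
    have habs : ‖ξ j * z ^ j‖ = ‖ξ j‖ * r ^ j := by
      simp [norm_mul, norm_pow, hrdef]
    rw [habs]
    have hpow : r ^ j ≤ Real.exp δ * r ^ τ := by
      rcases le_or_gt j τ with h | h
      · have hk : ((τ - j : ℕ) : ℝ) ≤ (n : ℝ) := by
          exact_mod_cast le_trans (Nat.sub_le τ j) hτ
        have h1 : Real.exp (-δ) ≤ r ^ (τ - j) := by
          calc Real.exp (-δ) ≤ Real.exp ((τ - j : ℕ) * (-δ / n)) := by
                apply Real.exp_le_exp.mpr
                have : ((τ - j : ℕ) : ℝ) * (δ / n) ≤ δ := by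
                  calc ((τ - j : ℕ) : ℝ) * (δ / n) ≤ n * (δ / n) :=
                        mul_le_mul_of_nonneg_right hk (by positivity)
                    _ = δ := by field_simp
                have heq : ((τ - j : ℕ) : ℝ) * (-δ / n) = -(((τ - j : ℕ) : ℝ) * (δ / n)) := by
                  ring
                rw [heq]; linarith
            _ = (Real.exp (-δ / n)) ^ (τ - j) := Real.exp_nat_mul _ _
            _ ≤ r ^ (τ - j) := pow_le_pow_left₀ (Real.exp_pos _).le hz1 _
        have hsplit : r ^ τ = r ^ (τ - j) * r ^ j := by
          rw [← pow_add, Nat.sub_add_cancel h]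
        calc r ^ j = Real.exp δ * Real.exp (-δ) * r ^ j := by
              rw [← Real.exp_add, add_neg_cancel, Real.exp_zero, one_mul]
          _ ≤ Real.exp δ * r ^ (τ - j) * r ^ j := by
              apply mul_le_mul_of_nonneg_right _ (pow_nonneg hrpos.le _)
              exact mul_le_mul_of_nonneg_left h1 (Real.exp_pos _).le
          _ = Real.exp δ * r ^ τ := by rw [hsplit]; ring
      · have hk : ((j - τ : ℕ) : ℝ) ≤ (n : ℝ) := by
          exact_mod_cast le_trans (Nat.sub_le j τ) hjn
        have h1 : r ^ (j - τ) ≤ Real.exp δ := by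
          calc r ^ (j - τ) ≤ (Real.exp (δ / n)) ^ (j - τ) :=
                pow_le_pow_left₀ hrpos.le hz2 _
            _ = Real.exp ((j - τ : ℕ) * (δ / n)) := (Real.exp_nat_mul _ _).symm
            _ ≤ Real.exp δ := by
                apply Real.exp_le_exp.mpr
                calc ((j - τ : ℕ) : ℝ) * (δ / n) ≤ n * (δ / n) :=
                      mul_le_mul_of_nonneg_right hk (by positivity)
                  _ = δ := by field_simp
        have hsplit : r ^ j = r ^ τ * r ^ (j - τ) := by
          rw [← pow_add, Nat.add_sub_cancel' h.le]
        calc r ^ j = r ^ τ * r ^ (j - τ) := hsplit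
          _ ≤ r ^ τ * Real.exp δ :=
              mul_le_mul_of_nonneg_left h1 (pow_nonneg hrpos.le _)
          _ = Real.exp δ * r ^ τ := by ring
    calc ‖ξ j‖ * r ^ j ≤ ‖ξ j‖ * (Real.exp δ * r ^ τ) :=
          mul_le_mul_of_nonneg_left hpow (norm_nonneg _)
      _ = Real.exp δ * ‖ξ j‖ * r ^ τ := by ring
  -- ξ τ * z ^ τ = - rest
  have hsum : ξ τ * z ^ τ = -∑ j ∈ (Finset.range (n+1)).erase τ, ξ j * z ^ j := by
    have := Finset.sum_erase_add (Finset.range (n+1)) (fun j => ξ j * z ^ j) hτmem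
    rw [hG] at this
    linear_combination this
  have h2 : ‖ξ τ‖ * r ^ τ ≤
      (Real.exp δ * ∑ j ∈ (Finset.range (n+1)).erase τ, ‖ξ j‖) * r ^ τ := by
    calc ‖ξ τ‖ * r ^ τ = ‖ξ τ * z ^ τ‖ := by
          simp [norm_mul, norm_pow, hrdef]
      _ = ‖∑ j ∈ (Finset.range (n+1)).erase τ, ξ j * z ^ j‖ := by
          rw [hsum, norm_neg]
      _ ≤ ∑ j ∈ (Finset.range (n+1)).erase τ, ‖ξ j * z ^ j‖ :=
          norm_sum_le _ _
      _ ≤ ∑ j ∈ (Finset.range (n+1)).erase τ, Real.exp δ * ‖ξ j‖ * r ^ τ :=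
          Finset.sum_le_sum key
      _ = (Real.exp δ * ∑ j ∈ (Finset.range (n+1)).erase τ, ‖ξ j‖) * r ^ τ := by
          rw [Finset.mul_sum, Finset.sum_mul]
  have h3 : ‖ξ τ‖ ≤
      Real.exp δ * ∑ j ∈ (Finset.range (n+1)).erase τ, ‖ξ j‖ :=
    le_of_mul_le_mul_right h2 (pow_pos hrpos _)
  exact absurd h3 (not_le.mpr hbig)
end

section
/- Let (η_j)_{j≥0} be i.i.d. nonnegative real random variables with E[η_0] = ∞, and set S_n = Σ_{j=0}^n η_j and M_n = max_{0≤j≤n} η_j. Then (S_n - M_n)/n → ∞ almost surely as n → ∞. -/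
open MeasureTheory ProbabilityTheory Filter Finset Topology ENNReal

theorem stmt18 {Ω : Type*} [MeasurableSpace Ω] (μ : Measure Ω) [IsProbabilityMeasure μ]
    (η : ℕ → Ω → ℝ) (hmeas : ∀ i, Measurable (η i))
    (hnn : ∀ i ω, 0 ≤ η i ω)
    (hindep : iIndepFun η μ)
    (hident : ∀ i, IdentDistrib (η i) (η 0) μ μ)
    (hmean : ∫⁻ ω, ENNReal.ofReal (η 0 ω) ∂μ = ⊤) :
    ∀ᵐ ω ∂μ, Tendsto
      (fun n : ℕ =>
        ((∑ j ∈ Finset.range (n + 1), η j ω) -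
          (Finset.range (n + 1)).sup' (Finset.nonempty_range_iff.mpr n.succ_ne_zero)
            (fun j => η j ω)) / n)
      atTop atTop := by
  -- truncated variables
  set Y : ℕ → ℕ → Ω → ℝ := fun c i ω => min (η i ω) c with hY
  have hYmeas : ∀ c i, Measurable (Y c i) := fun c i => (hmeas i).min measurable_const
  have hYnn : ∀ c i ω, 0 ≤ Y c i ω := fun c i ω => le_min (hnn i ω) (Nat.cast_nonneg c)
  have hYint : ∀ c, Integrable (Y c 0) μ := by
    intro c
    refine Integrable.mono' (integrable_const (c : ℝ)) (hYmeas c 0).aestronglyMeasurable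
      (ae_of_all _ fun ω => ?_)
    rw [Real.norm_eq_abs, abs_of_nonneg (hYnn c 0 ω)]
    exact min_le_right _ _
  have hYindep : ∀ c, Pairwise (Function.onFun (IndepFun · · μ) (Y c)) := fun c i j hij =>
    (hindep.indepFun hij).comp (measurable_id.min measurable_const)
      (measurable_id.min measurable_const)
  have hYident : ∀ c i, IdentDistrib (Y c i) (Y c 0) μ μ := fun c i =>
    (hident i).comp (measurable_id.min measurable_const)
  have hSLLN : ∀ᵐ ω ∂μ, ∀ c : ℕ,
      Tendsto (fun n : ℕ => (∑ i ∈ range n, Y c i ω) / n) atTop (𝓝 (μ[Y c 0])) :=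
    ae_all_iff.2 fun c => strong_law_ae_real _ (hYint c) (hYindep c) (hYident c)
  -- truncated means tend to infinity
  have hmeans : ∀ b : ℝ, ∃ c : ℕ, b < μ[Y c 0] := by
    intro b
    have hmono : Monotone fun c : ℕ => fun ω => min (ENNReal.ofReal (η 0 ω)) (c : ℝ≥0∞) := by
      intro c d hcd
      exact fun ω => min_le_min le_rfl (by exact_mod_cast hcd)
    have hsup : (⨆ c : ℕ, ∫⁻ ω, min (ENNReal.ofReal (η 0 ω)) (c : ℝ≥0∞) ∂μ) = ⊤ := by
      rw [← lintegral_iSup (fun c => ((hmeas 0).ennreal_ofReal).min measurable_const) hmono,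
        ← hmean]
      congr 1
      ext ω
      rw [← inf_iSup_eq]
      simp [ENNReal.iSup_natCast]
    obtain ⟨c, hc⟩ : ∃ c : ℕ,
        ENNReal.ofReal b < ∫⁻ ω, min (ENNReal.ofReal (η 0 ω)) (c : ℝ≥0∞) ∂μ := by
      refine lt_iSup_iff.1 ?_
      rw [hsup]
      exact ENNReal.ofReal_lt_top
    refine ⟨c, ?_⟩
    have hLne : (∫⁻ ω, min (ENNReal.ofReal (η 0 ω)) (c : ℝ≥0∞) ∂μ) ≠ ⊤ := by
      refine ne_top_of_le_ne_top ?_ (lintegral_mono fun ω => min_le_right _ _)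
      simp
    have heq : μ[Y c 0] = (∫⁻ ω, min (ENNReal.ofReal (η 0 ω)) (c : ℝ≥0∞) ∂μ).toReal := by
      rw [integral_eq_lintegral_of_nonneg_ae (ae_of_all _ (hYnn c 0))
        (hYmeas c 0).aestronglyMeasurable]
      congr 1
      apply lintegral_congr fun ω => ?_
      rw [hY]
      simp only
      rw [← ENNReal.ofReal_natCast c]
      exact Monotone.map_min (fun _ _ h => ENNReal.ofReal_le_ofReal h)
    rw [heq]
    rcases le_or_gt 0 b with hb | hb
    · exact (ENNReal.ofReal_lt_iff_lt_toReal hb hLne).1 hc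
    · exact hb.trans_le ENNReal.toReal_nonneg
  filter_upwards [hSLLN] with ω hω
  rw [tendsto_atTop]
  intro b
  obtain ⟨c, hc⟩ := hmeans b
  have h1 : Tendsto (fun n : ℕ => (∑ i ∈ range n, Y c i ω) / n - (c : ℝ) / n) atTop
      (𝓝 (μ[Y c 0] - 0)) := (hω c).sub (tendsto_const_div_atTop_nhds_zero_nat (c : ℝ))
  have h2 : ∀ᶠ n : ℕ in atTop, b < (∑ i ∈ range n, Y c i ω) / n - (c : ℝ) / n :=
    h1.eventually (eventually_gt_nhds (by simpa using hc))
  filter_upwards [h2, eventually_ge_atTop 1] with n hn hn1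
  refine hn.le.trans ?_
  have hnpos : (0 : ℝ) < n := by exact_mod_cast hn1
  rw [div_sub_div_same]
  refine div_le_div_of_nonneg_right ?_ hnpos.le
  -- key inequality: ∑_{range n} Y - c ≤ S_{n} - M_{n} (sums over range (n+1))
  obtain ⟨m, hm, hM⟩ := Finset.exists_mem_eq_sup' (Finset.nonempty_range_iff.mpr n.succ_ne_zero)
    (fun j => η j ω)
  rw [hM]
  have h3 : (∑ i ∈ range n, Y c i ω) ≤ ∑ i ∈ range (n + 1), Y c i ω :=
    Finset.sum_le_sum_of_subset_of_nonneg (Finset.range_subset_range.2 (Nat.le_succ n))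
      fun i _ _ => hYnn c i ω
  have h4 : η m ω - (c : ℝ) ≤ ∑ j ∈ range (n + 1), (η j ω - Y c j ω) := by
    have h5 : η m ω - Y c m ω ≤ ∑ j ∈ range (n + 1), (η j ω - Y c j ω) :=
      Finset.single_le_sum (f := fun j => η j ω - Y c j ω)
        (fun j _ => sub_nonneg.2 (min_le_left _ _)) hm
    have h6 : Y c m ω ≤ (c : ℝ) := min_le_right _ _
    linarith
  rw [Finset.sum_sub_distrib] at h4
  linarith [h3]
end
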